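/- The aggregation map σ is ℓ-Lipschitz on Ω with ℓ = K₃/(√n μ); that is, ‖σ(x) − σ(y)‖ ≤ (K₃/(√n μ))‖x − y‖ for all x, y ∈ Ω. -/

import Mathlib

open scoped RealInnerProductSpace

noncomputable section

/-- Euclidean space `ℝ^m`. -/
abbrev E (m : ℕ) := EuclideanSpace ℝ (Fin m)

/-- Frobenius norm of a continuous linear map between Euclidean spaces
(the Frobenius norm of its matrix in the standard bases). -/
def frobNorm {m₁ m₂ : ℕ} (T : E m₁ →L[ℝ] E m₂) : ℝ :=
  Real.sqrt (∑ j : Fin m₂, ∑ i : Fin m₁, (T (EuclideanSpace.single i (1 : ℝ)) j) ^ 2)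

/-- `∇₁f(u, y)`: gradient of a bifunction in its first argument. -/
def grad₁ {m₁ m₂ : ℕ} (f : E m₁ → E m₂ → ℝ) (u : E m₁) (y : E m₂) : E m₁ :=
  gradient (fun u' => f u' y) u

/-- `∇₂f(u, y)`: gradient of a bifunction in its second argument. -/
def grad₂ {m₁ m₂ : ℕ} (f : E m₁ → E m₂ → ℝ) (u : E m₁) (y : E m₂) : E m₂ :=
  gradient (f u) y

/-- `∇₂₁f(u, y)`: Jacobian of `∇₂f` in the first argument
(a linear map `ℝ^{m₁} → ℝ^{m₂}`; the paper's `m₁×m₂` matrix in its row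
convention is the transpose of this map). -/
def jac₂₁ {m₁ m₂ : ℕ} (f : E m₁ → E m₂ → ℝ) (u : E m₁) (y : E m₂) : E m₁ →L[ℝ] E m₂ :=
  fderiv ℝ (fun u' => grad₂ f u' y) u

/-- `∇₂₂f(u, y)`: Hessian of `f` in the second argument. -/
def hess₂₂ {m₁ m₂ : ℕ} (f : E m₁ → E m₂ → ℝ) (u : E m₁) (y : E m₂) : E m₂ →L[ℝ] E m₂ :=
  fderiv ℝ (fun y' => grad₂ f u y') y

/-- `∇_{x_i}J_i(x_i, σ(x))`: the `i`-th component of the pseudo-gradient mapping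
`F(x) = col(∇_{x_i}J_i(x_i, σ(x)))_i`. -/
def pseudoGrad {n m₁ m₂ : ℕ} (J : Fin n → E m₁ → E m₂ → ℝ)
    (σ : (Fin n → E m₁) → E m₂) (x : Fin n → E m₁) (i : Fin n) : E m₁ :=
  gradient (fun u => J i u (σ (Function.update x i u))) (x i)

/-- the aggregation map `σ` is `ℓ`-Lipschitz on `Ω` with
`ℓ = K₃/(√n μ)`, i.e. `‖σ(x) − σ(y)‖ ≤ (K₃/(√n μ))‖x − y‖` for all `x, y ∈ Ω`
(the norm on `Ω ⊂ (ℝ^{m₁})ⁿ` being the Euclidean product norm). -/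
lemma opNorm_le_frobNorm {m₁ m₂ : ℕ} (T : E m₁ →L[ℝ] E m₂) : ‖T‖ ≤ frobNorm T := by
  refine ContinuousLinearMap.opNorm_le_bound _ (Real.sqrt_nonneg _) fun v => ?_
  have hv : v = ∑ i : Fin m₁, v i • EuclideanSpace.single i (1 : ℝ) := by
    ext j
    have := map_sum (EuclideanSpace.proj (𝕜 := ℝ) j) (fun i : Fin m₁ => v i • EuclideanSpace.single i (1 : ℝ)) Finset.univ
    simp only [PiLp.proj_apply] at this
    rw [this]
    simp [EuclideanSpace.single_apply]
  have hTv : ∀ j, T v j = ∑ i, v i * T (EuclideanSpace.single i (1 : ℝ)) j := by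
    intro j
    conv_lhs => rw [hv]
    rw [map_sum]
    have := map_sum (EuclideanSpace.proj (𝕜 := ℝ) j) (fun i : Fin m₁ => T (v i • EuclideanSpace.single i (1 : ℝ))) Finset.univ
    simp only [PiLp.proj_apply] at this
    rw [this]
    simp [mul_comm]
  have hv2 : ‖v‖ ^ 2 = ∑ i, v i ^ 2 := by
    rw [EuclideanSpace.norm_eq, Real.sq_sqrt (by positivity)]
    simp [sq_abs]
  have key : ‖T v‖ ^ 2 ≤ (∑ j : Fin m₂, ∑ i : Fin m₁, (T (EuclideanSpace.single i (1 : ℝ)) j) ^ 2) * ‖v‖ ^ 2 := by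
    rw [EuclideanSpace.norm_eq, Real.sq_sqrt (by positivity), Finset.sum_mul]
    refine Finset.sum_le_sum fun j _ => ?_
    rw [hv2]
    calc ‖T v j‖ ^ 2 = (∑ i, T (EuclideanSpace.single i (1 : ℝ)) j * v i) ^ 2 := by
          rw [hTv j]; rw [Real.norm_eq_abs, sq_abs]; congr 1; exact Finset.sum_congr rfl fun i _ => mul_comm _ _
      _ ≤ (∑ i, (T (EuclideanSpace.single i (1 : ℝ)) j) ^ 2) * ∑ i, v i ^ 2 :=
          Finset.sum_mul_sq_le_sq_mul_sq _ _ _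
  have h2 := Real.sqrt_le_sqrt key
  rwa [Real.sqrt_sq (norm_nonneg _), Real.sqrt_mul (by positivity), Real.sqrt_sq (norm_nonneg _)] at h2

theorem aggregation_lipschitz (n m₁ m₂ : ℕ) (hn : 0 < n) (μ K₃ : ℝ) (hμ : 0 < μ)
    (Ω : Fin n → Set (E m₁))
    (hΩne : ∀ i, (Ω i).Nonempty) (hΩconv : ∀ i, Convex ℝ (Ω i))
    (hΩcomp : ∀ i, IsCompact (Ω i))
    (g : Fin n → E m₁ → E m₂ → ℝ)
    (hg : ∀ j, ContDiff ℝ 2 (fun p : E m₁ × E m₂ => g j p.1 p.2))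
    (hgsc : ∀ j u, StrongConvexOn Set.univ μ (g j u))
    (σ : (Fin n → E m₁) → E m₂)
    (hσ : ∀ x y, ∑ j, g j (x j) (σ x) ≤ ∑ j, g j (x j) y)
    (hK₃ : ∀ j, ∀ u ∈ Ω j, ∀ y : E m₂, frobNorm (jac₂₁ (g j) u y) ≤ K₃) :
    ∀ x y : Fin n → E m₁, (∀ i, x i ∈ Ω i) → (∀ i, y i ∈ Ω i) →
      ‖σ x - σ y‖ ≤ K₃ / (Real.sqrt n * μ) * Real.sqrt (∑ i, ‖x i - y i‖ ^ 2) := by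
  intro x y hx hy
  have hK₃0 : 0 ≤ K₃ := by
    obtain ⟨u, hu⟩ := hΩne ⟨0, hn⟩
    exact le_trans (Real.sqrt_nonneg _) (hK₃ ⟨0, hn⟩ u hu 0)
  have hn' : (0:ℝ) < n := by exact_mod_cast hn
  have hsqn : (0:ℝ) < Real.sqrt n := Real.sqrt_pos.mpr hn'
  have hS0 : (0:ℝ) ≤ Real.sqrt (∑ i, ‖x i - y i‖ ^ 2) := Real.sqrt_nonneg _
  by_cases hD0 : ‖σ x - σ y‖ = 0
  · rw [hD0]
    exact mul_nonneg (div_nonneg hK₃0 (by positivity)) hS0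
  have hDpos : 0 < ‖σ x - σ y‖ := lt_of_le_of_ne (norm_nonneg _) (Ne.symm hD0)
  -- differentiability in the second variable
  have hdiff2 : ∀ j (u : E m₁), Differentiable ℝ (fun w => g j u w) := by
    intro j u
    have h1 : ContDiff ℝ 2 (fun w : E m₂ => g j u w) :=
      (hg j).comp (f := fun w : E m₂ => (u, w)) (ContDiff.prodMk (contDiff_const (c := u)) contDiff_id)
    exact h1.differentiable (by norm_num)
  -- `u ↦ ∇₂ g_j(u, w)` is C¹
  have hψ : ∀ j (w : E m₂), ContDiff ℝ 1 (fun u : E m₁ => grad₂ (g j) u w) := by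
    intro j w
    have hΦ : ContDiff ℝ 1 (fun u : E m₁ => fderiv ℝ (g j u) w) :=
      ContDiff.fderiv (f := g j) (g := fun _ : E m₁ => w)
        (hg j) contDiff_const (by norm_num)
    exact ((InnerProductSpace.toDual ℝ (E m₂)).symm.contDiff).comp hΦ
  -- Lipschitz bound on ∇₂g_j in its first argument, along Ω_j
  have hgrad_lip : ∀ j (w : E m₂),
      ‖grad₂ (g j) (x j) w - grad₂ (g j) (y j) w‖ ≤ K₃ * ‖x j - y j‖ := by
    intro j w
    have h := (hΩconv j).norm_image_sub_le_of_norm_fderiv_le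
      (f := fun u : E m₁ => grad₂ (g j) u w) (C := K₃)
      (fun u _ => ((hψ j w).differentiable one_ne_zero).differentiableAt)
      (fun u hu => by
        have he : fderiv ℝ (fun u' : E m₁ => grad₂ (g j) u' w) u = jac₂₁ (g j) u w := rfl
        rw [he]
        exact (opNorm_le_frobNorm _).trans (hK₃ j u hu w))
      (hy j) (hx j)
    exact h
  -- rectangle bound
  have hrect : ∀ j, (g j (x j) (σ y) - g j (y j) (σ y)) - (g j (x j) (σ x) - g j (y j) (σ x))
      ≤ K₃ * ‖x j - y j‖ * ‖σ x - σ y‖ := by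
    intro j
    have hdf : ∀ w : E m₂, HasFDerivAt (fun w' => g j (x j) w' - g j (y j) w')
        (fderiv ℝ (g j (x j)) w - fderiv ℝ (g j (y j)) w) w := fun w =>
      ((hdiff2 j (x j) w).hasFDerivAt).sub ((hdiff2 j (y j) w).hasFDerivAt)
    have hbound : ∀ w : E m₂, ‖fderiv ℝ (g j (x j)) w - fderiv ℝ (g j (y j)) w‖
        ≤ K₃ * ‖x j - y j‖ := by
      intro w
      have he : fderiv ℝ (g j (x j)) w - fderiv ℝ (g j (y j)) w
          = InnerProductSpace.toDual ℝ (E m₂) (grad₂ (g j) (x j) w - grad₂ (g j) (y j) w) := by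
        simp only [grad₂, gradient, map_sub, LinearIsometryEquiv.apply_symm_apply]
      rw [he, LinearIsometryEquiv.norm_map]
      exact hgrad_lip j w
    have h := convex_univ.norm_image_sub_le_of_norm_hasFDerivWithin_le
      (fun w _ => (hdf w).hasFDerivWithinAt) (fun w _ => hbound w)
      (Set.mem_univ (σ x)) (Set.mem_univ (σ y))
    have h2 : (g j (x j) (σ y) - g j (y j) (σ y)) - (g j (x j) (σ x) - g j (y j) (σ x))
        ≤ ‖(g j (x j) (σ y) - g j (y j) (σ y)) - (g j (x j) (σ x) - g j (y j) (σ x))‖ :=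
      le_abs_self _
    rw [norm_sub_rev (σ y) (σ x)] at h
    calc (g j (x j) (σ y) - g j (y j) (σ y)) - (g j (x j) (σ x) - g j (y j) (σ x))
        ≤ ‖(g j (x j) (σ y) - g j (y j) (σ y)) - (g j (x j) (σ x) - g j (y j) (σ x))‖ := h2
      _ ≤ K₃ * ‖x j - y j‖ * ‖σ x - σ y‖ := h
  -- strong convexity step, for every a ∈ [0,1)
  have hkey : ∀ a : ℝ, 0 ≤ a → a < 1 →
      a * ((n : ℝ) * μ * ‖σ x - σ y‖ ^ 2) ≤ ∑ j, K₃ * ‖x j - y j‖ * ‖σ x - σ y‖ := by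
    intro a ha ha1
    have hb0 : (0:ℝ) < 1 - a := by linarith
    have hsum : ∀ (u : Fin n → E m₁) (p q : E m₂),
        ∑ j, g j (u j) (a • p + (1 - a) • q) ≤
          a * ∑ j, g j (u j) p + (1 - a) * ∑ j, g j (u j) q
            - (n : ℝ) * (a * (1 - a) * (μ / 2 * ‖p - q‖ ^ 2)) := by
      intro u p q
      have h1 : ∀ j ∈ Finset.univ, g j (u j) (a • p + (1 - a) • q) ≤
          a * g j (u j) p + (1 - a) * g j (u j) q - a * (1 - a) * (μ / 2 * ‖p - q‖ ^ 2) :=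
        fun j _ => (hgsc j (u j)).2 (Set.mem_univ p) (Set.mem_univ q) ha hb0.le (by ring)
      calc ∑ j, g j (u j) (a • p + (1 - a) • q)
          ≤ ∑ j, (a * g j (u j) p + (1 - a) * g j (u j) q - a * (1 - a) * (μ / 2 * ‖p - q‖ ^ 2)) :=
            Finset.sum_le_sum h1
        _ = a * ∑ j, g j (u j) p + (1 - a) * ∑ j, g j (u j) q
            - (n : ℝ) * (a * (1 - a) * (μ / 2 * ‖p - q‖ ^ 2)) := by
            rw [Finset.sum_sub_distrib, Finset.sum_add_distrib, ← Finset.mul_sum, ← Finset.mul_sum,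
              Finset.sum_const, Finset.card_univ, Fintype.card_fin, nsmul_eq_mul]
    have hx1 : ∑ j, g j (x j) (σ x) ≤ ∑ j, g j (x j) (a • σ x + (1 - a) • σ y) := hσ x _
    have hx2 := hsum x (σ x) (σ y)
    have hy1 : ∑ j, g j (y j) (σ y) ≤ ∑ j, g j (y j) (a • σ y + (1 - a) • σ x) := hσ y _
    have hy2 := hsum y (σ y) (σ x)
    rw [norm_sub_rev (σ y) (σ x)] at hy2
    have h7 := hx1.trans hx2
    have h8 := hy1.trans hy2
    have hC : (∑ j, g j (x j) (σ y)) - (∑ j, g j (x j) (σ x))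
        + ((∑ j, g j (y j) (σ x)) - (∑ j, g j (y j) (σ y)))
        ≤ ∑ j, K₃ * ‖x j - y j‖ * ‖σ x - σ y‖ := by
      rw [← Finset.sum_sub_distrib, ← Finset.sum_sub_distrib, ← Finset.sum_add_distrib]
      exact Finset.sum_le_sum fun j _ => by have := hrect j; linarith
    have h6 := mul_le_mul_of_nonneg_left hC hb0.le
    have h9 : (1 - a) * (a * ((n : ℝ) * μ * ‖σ x - σ y‖ ^ 2))
        ≤ (1 - a) * ∑ j, K₃ * ‖x j - y j‖ * ‖σ x - σ y‖ := by nlinarith [h6, h7, h8]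
    exact le_of_mul_le_mul_left h9 hb0
  -- pass to the limit a → 1
  have hC0 : (0:ℝ) ≤ ∑ j, K₃ * ‖x j - y j‖ * ‖σ x - σ y‖ := by
    have := hkey 0 le_rfl one_pos
    simpa using this
  have hP : (0:ℝ) < (n : ℝ) * μ * ‖σ x - σ y‖ ^ 2 := by positivity
  have hmain : (n : ℝ) * μ * ‖σ x - σ y‖ ^ 2 ≤ ∑ j, K₃ * ‖x j - y j‖ * ‖σ x - σ y‖ := by
    by_contra hcon
    push_neg at hcon
    set C := ∑ j, K₃ * ‖x j - y j‖ * ‖σ x - σ y‖ with hCdef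
    set P := (n : ℝ) * μ * ‖σ x - σ y‖ ^ 2 with hPdef
    have h1 : C / P < 1 := (div_lt_one hP).mpr hcon
    have h2 : 0 ≤ C / P := div_nonneg hC0 hP.le
    have ha0 : (0:ℝ) ≤ (C / P + 1) / 2 := by linarith
    have ha1 : (C / P + 1) / 2 < 1 := by linarith
    have hk := hkey _ ha0 ha1
    have h3 : C / P < (C / P + 1) / 2 := by linarith
    have h4 : C < (C / P + 1) / 2 * P := by
      have := (div_lt_iff₀ hP).mp h3
      linarith
    linarith
  -- Cauchy–Schwarz on the sum of norms
  have hCS : ∑ j, ‖x j - y j‖ ≤ Real.sqrt n * Real.sqrt (∑ i, ‖x i - y i‖ ^ 2) := by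
    have h1 : (∑ j, ‖x j - y j‖) ^ 2 ≤ (n : ℝ) * ∑ j, ‖x j - y j‖ ^ 2 := by
      have := sq_sum_le_card_mul_sum_sq (s := (Finset.univ : Finset (Fin n)))
        (f := fun j => ‖x j - y j‖)
      simpa using this
    have h2 : (0:ℝ) ≤ ∑ j, ‖x j - y j‖ := Finset.sum_nonneg fun j _ => norm_nonneg _
    have h3 := Real.sqrt_le_sqrt h1
    rwa [Real.sqrt_sq h2, Real.sqrt_mul hn'.le] at h3
  -- put everything together
  have h10 : (n : ℝ) * μ * ‖σ x - σ y‖ ^ 2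
      ≤ K₃ * (Real.sqrt n * Real.sqrt (∑ i, ‖x i - y i‖ ^ 2)) * ‖σ x - σ y‖ := by
    calc (n : ℝ) * μ * ‖σ x - σ y‖ ^ 2 ≤ ∑ j, K₃ * ‖x j - y j‖ * ‖σ x - σ y‖ := hmain
      _ = K₃ * (∑ j, ‖x j - y j‖) * ‖σ x - σ y‖ := by
          rw [← Finset.sum_mul, ← Finset.mul_sum]
      _ ≤ K₃ * (Real.sqrt n * Real.sqrt (∑ i, ‖x i - y i‖ ^ 2)) * ‖σ x - σ y‖ := by
          apply mul_le_mul_of_nonneg_right _ (norm_nonneg _)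
          exact mul_le_mul_of_nonneg_left hCS hK₃0
  have h11 : (n : ℝ) * μ * ‖σ x - σ y‖ ≤ K₃ * (Real.sqrt n * Real.sqrt (∑ i, ‖x i - y i‖ ^ 2)) := by
    apply le_of_mul_le_mul_right _ hDpos
    nlinarith [h10]
  have hnn : Real.sqrt n * Real.sqrt n = (n : ℝ) := Real.mul_self_sqrt (Nat.cast_nonneg n)
  rw [div_mul_eq_mul_div, le_div_iff₀ (by positivity : (0:ℝ) < Real.sqrt n * μ)]
  have h12 : Real.sqrt n * (‖σ x - σ y‖ * (Real.sqrt n * μ))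
      ≤ Real.sqrt n * (K₃ * Real.sqrt (∑ i, ‖x i - y i‖ ^ 2)) := by
    calc Real.sqrt n * (‖σ x - σ y‖ * (Real.sqrt n * μ))
        = (Real.sqrt n * Real.sqrt n) * μ * ‖σ x - σ y‖ := by ring
      _ = (n : ℝ) * μ * ‖σ x - σ y‖ := by rw [hnn]
      _ ≤ K₃ * (Real.sqrt n * Real.sqrt (∑ i, ‖x i - y i‖ ^ 2)) := h11
      _ = Real.sqrt n * (K₃ * Real.sqrt (∑ i, ‖x i - y i‖ ^ 2)) := by ring
  exact le_of_mul_le_mul_left h12 hsqn
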